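/- The map X ↦ exp(Z_⊥ X Z⁺) from ℝ^{(k−r)×r} to the invertible k×k matrices is an injective group homomorphism from the additive group ℝ^{(k−r)×r} to GL_k(ℝ): for all X, Y ∈ ℝ^{(k−r)×r} one has exp(Z_⊥XZ⁺)·exp(Z_⊥YZ⁺) = exp(Z_⊥(X+Y)Z⁺), each exp(Z_⊥XZ⁺) is invertible with inverse exp(−Z_⊥XZ⁺), and exp(Z_⊥XZ⁺) = exp(Z_⊥YZ⁺) implies X = Y. In particular the set 𝒢_Z := {exp(Z_⊥XZ⁺) : X ∈ ℝ^{(k−r)×r}} is a commutative subgroup of GL_k(ℝ) and exp : 𝔤_Z → 𝒢_Z is bijective, where 𝔤_Z := {Z_⊥XZ⁺ : X ∈ ℝ^{(k−r)×r}}. -/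

import Mathlib

open Matrix

lemma aux_isUnit_of_rank {n : ℕ} (A : Matrix (Fin n) (Fin n) ℝ) (h : A.rank = n) :
    IsUnit A := by
  rw [← Matrix.mulVec_surjective_iff_isUnit]
  have hrange : LinearMap.range A.mulVecLin = ⊤ := by
    apply Submodule.eq_top_of_finrank_eq
    rw [show Module.finrank ℝ (LinearMap.range A.mulVecLin) = A.rank from rfl, h,
      Module.finrank_fintype_fun_eq_card, Fintype.card_fin]
  intro v
  obtain ⟨w, hw⟩ := LinearMap.range_eq_top.mp hrange v
  exact ⟨w, hw⟩

lemma aux_exp_sq_zero {n : ℕ} (A : Matrix (Fin n) (Fin n) ℝ) (h : A * A = 0) :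
    NormedSpace.exp A = 1 + A := by
  rw [NormedSpace.exp_eq_tsum (𝕂 := ℝ)]
  beta_reduce
  have hzero : ∀ m : ℕ, m ∉ ({0, 1} : Finset ℕ) → (((m.factorial : ℝ))⁻¹ • A ^ m) = 0 := by
    intro m hm
    simp only [Finset.mem_insert, Finset.mem_singleton] at hm
    push_neg at hm
    have h2 : 2 ≤ m := by omega
    have : A ^ m = 0 := by
      calc A ^ m = A ^ 2 * A ^ (m - 2) := by rw [← pow_add]; congr 1; omega
      _ = 0 := by rw [pow_two, h, Matrix.zero_mul]
    rw [this, smul_zero]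
  rw [tsum_eq_sum hzero]
  simp [pow_zero, pow_one]

/-- `X ↦ exp (Z_⊥ X Z⁺)` is an injective group homomorphism from the additive
group `ℝ^{(k-r)×r}` into the invertible `k × k` matrices. -/
theorem stmt10 (k r : ℕ) (hr : 0 < r) (hrk : r < k)
    (Z : Matrix (Fin k) (Fin r) ℝ) (hZ : Z.rank = r)
    (Zperp : Matrix (Fin k) (Fin (k - r)) ℝ) (hZperp : Zperp.rank = k - r)
    (horth : Zᵀ * Zperp = 0) :
    (∀ X Y : Matrix (Fin (k - r)) (Fin r) ℝ,
      NormedSpace.exp (Zperp * X * ((Zᵀ * Z)⁻¹ * Zᵀ)) *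
          NormedSpace.exp (Zperp * Y * ((Zᵀ * Z)⁻¹ * Zᵀ))
        = NormedSpace.exp (Zperp * (X + Y) * ((Zᵀ * Z)⁻¹ * Zᵀ))) ∧
    (∀ X : Matrix (Fin (k - r)) (Fin r) ℝ,
      NormedSpace.exp (Zperp * X * ((Zᵀ * Z)⁻¹ * Zᵀ)) *
          NormedSpace.exp (-(Zperp * X * ((Zᵀ * Z)⁻¹ * Zᵀ))) = 1 ∧
      NormedSpace.exp (-(Zperp * X * ((Zᵀ * Z)⁻¹ * Zᵀ))) *
          NormedSpace.exp (Zperp * X * ((Zᵀ * Z)⁻¹ * Zᵀ)) = 1) ∧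
    (∀ X Y : Matrix (Fin (k - r)) (Fin r) ℝ,
      NormedSpace.exp (Zperp * X * ((Zᵀ * Z)⁻¹ * Zᵀ))
        = NormedSpace.exp (Zperp * Y * ((Zᵀ * Z)⁻¹ * Zᵀ)) → X = Y) := by
  have hpinv : ((Zᵀ * Z)⁻¹ * Zᵀ) * Zperp = 0 := by
    rw [Matrix.mul_assoc, horth, Matrix.mul_zero]
  have hprod : ∀ X Y : Matrix (Fin (k - r)) (Fin r) ℝ,
      (Zperp * X * ((Zᵀ * Z)⁻¹ * Zᵀ)) * (Zperp * Y * ((Zᵀ * Z)⁻¹ * Zᵀ)) = 0 := by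
    intro X Y
    calc (Zperp * X * ((Zᵀ * Z)⁻¹ * Zᵀ)) * (Zperp * Y * ((Zᵀ * Z)⁻¹ * Zᵀ))
        = Zperp * (X * (((((Zᵀ * Z)⁻¹ * Zᵀ) * Zperp) * (Y * ((Zᵀ * Z)⁻¹ * Zᵀ))))) := by
          simp only [Matrix.mul_assoc]
      _ = 0 := by rw [hpinv, Matrix.zero_mul, Matrix.mul_zero, Matrix.mul_zero]
  have hexp : ∀ X : Matrix (Fin (k - r)) (Fin r) ℝ,
      NormedSpace.exp (Zperp * X * ((Zᵀ * Z)⁻¹ * Zᵀ))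
        = 1 + Zperp * X * ((Zᵀ * Z)⁻¹ * Zᵀ) :=
    fun X => aux_exp_sq_zero _ (hprod X X)
  have hZZ : IsUnit (Zᵀ * Z) := aux_isUnit_of_rank _ (by rw [Matrix.rank_transpose_mul_self, hZ])
  have hPP : IsUnit (Zperpᵀ * Zperp) :=
    aux_isUnit_of_rank _ (by rw [Matrix.rank_transpose_mul_self, hZperp])
  have hZZinv : (Zᵀ * Z)⁻¹ * (Zᵀ * Z) = 1 :=
    Matrix.nonsing_inv_mul _ ((Matrix.isUnit_iff_isUnit_det _).mp hZZ)
  have hPPinv : (Zperpᵀ * Zperp)⁻¹ * (Zperpᵀ * Zperp) = 1 :=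
    Matrix.nonsing_inv_mul _ ((Matrix.isUnit_iff_isUnit_det _).mp hPP)
  refine ⟨?_, ?_, ?_⟩
  · intro X Y
    rw [hexp X, hexp Y, hexp (X + Y)]
    rw [add_mul, one_mul, mul_add, mul_one, hprod X Y, add_zero,
      Matrix.mul_add, Matrix.add_mul, add_assoc]
    abel
  · intro X
    have hneg : -(Zperp * X * ((Zᵀ * Z)⁻¹ * Zᵀ)) = Zperp * (-X) * ((Zᵀ * Z)⁻¹ * Zᵀ) := by
      rw [Matrix.mul_neg, Matrix.neg_mul]
    constructor
    · rw [hneg, hexp X, hexp (-X)]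
      rw [add_mul, one_mul, mul_add, mul_one, hprod X (-X)]
      rw [Matrix.mul_neg, Matrix.neg_mul]
      abel
    · rw [hneg, hexp X, hexp (-X)]
      rw [add_mul, one_mul, mul_add, mul_one, hprod (-X) X]
      rw [Matrix.mul_neg, Matrix.neg_mul]
      abel
  · intro X Y h
    rw [hexp X, hexp Y] at h
    have h2 : Zperp * X * ((Zᵀ * Z)⁻¹ * Zᵀ) = Zperp * Y * ((Zᵀ * Z)⁻¹ * Zᵀ) :=
      add_left_cancel h
    have e1 : ∀ W : Matrix (Fin (k - r)) (Fin r) ℝ,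
        ((Zperpᵀ * Zperp)⁻¹ * Zperpᵀ) * (Zperp * W * ((Zᵀ * Z)⁻¹ * Zᵀ)) * Z = W := by
      intro W
      calc ((Zperpᵀ * Zperp)⁻¹ * Zperpᵀ) * (Zperp * W * ((Zᵀ * Z)⁻¹ * Zᵀ)) * Z
          = ((Zperpᵀ * Zperp)⁻¹ * (Zperpᵀ * Zperp)) * (W * ((Zᵀ * Z)⁻¹ * (Zᵀ * Z))) := by
            simp only [Matrix.mul_assoc]
        _ = W := by rw [hPPinv, hZZinv, Matrix.one_mul, Matrix.mul_one]
    rw [← e1 X, ← e1 Y, h2]
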